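/- Let ρ ∈ ℝⁿ with ρ_i = Σ_j |C_ij| > 0 for a symmetric matrix C, and Ĉ = diag(1/√ρ) C diag(1/√ρ). Define f(X) = −Ĉ • X + Σ_{i=1}^n (X_ii − ρ_i)⁺ on symmetric matrices X. Then f is 2-Lipschitz with respect to the nuclear norm, i.e., |f(X) − f(Y)| ≤ 2‖X − Y‖_nuc for all symmetric X, Y. -/

import Mathlib

open Matrix

/-- The nuclear norm of a real square matrix: the sum of its singular values. -/
noncomputable def nuclearNorm {n : ℕ} (A : Matrix (Fin n) (Fin n) ℝ) : ℝ :=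
  ∑ i, Real.sqrt ((show (Aᵀ * A).IsHermitian by
    simpa using Matrix.isHermitian_conjTranspose_mul_self A).eigenvalues i)

/-- The Frobenius (trace) inner product of two square real matrices. -/
noncomputable def matDot {n : ℕ} (A B : Matrix (Fin n) (Fin n) ℝ) : ℝ :=
  (Aᵀ * B).trace

namespace Stmt11Aux

variable {n : ℕ}

lemma isHermitian_of_isSymm {A : Matrix (Fin n) (Fin n) ℝ} (h : A.IsSymm) : A.IsHermitian := by
  ext i j
  rw [Matrix.conjTranspose_apply, star_trivial]
  exact h.apply i j

lemma trace_conj (V : Matrix (Fin n) (Fin n) ℝ) (hV : star V * V = 1) (d : Fin n → ℝ) :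
    (V * Matrix.diagonal d * star V).trace = ∑ i, d i := by
  rw [Matrix.trace_mul_cycle, hV, Matrix.one_mul, Matrix.trace_diagonal]

lemma conj_apply (V : Matrix (Fin n) (Fin n) ℝ) (d : Fin n → ℝ) (i j : Fin n) :
    (V * Matrix.diagonal d * star V) i j = ∑ k, V i k * d k * V j k := by
  rw [Matrix.mul_apply]
  refine Finset.sum_congr rfl fun k _ => ?_
  rw [Matrix.mul_diagonal, Matrix.star_apply, star_trivial]

lemma conj_mul_conj (V : Matrix (Fin n) (Fin n) ℝ) (hV : star V * V = 1) (d e : Fin n → ℝ) :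
    (V * Matrix.diagonal d * star V) * (V * Matrix.diagonal e * star V)
      = V * Matrix.diagonal (fun i => d i * e i) * star V := by
  have h1 : star V * (V * (Matrix.diagonal e * star V)) = Matrix.diagonal e * star V := by
    rw [← Matrix.mul_assoc, hV, Matrix.one_mul]
  simp only [Matrix.mul_assoc, h1, ← Matrix.diagonal_mul_diagonal, Matrix.mul_assoc]

lemma quad_bound (C : Matrix (Fin n) (Fin n) ℝ) (hC : C.IsSymm)
    (ρ : Fin n → ℝ) (hρ : ∀ i, ρ i = ∑ j, |C i j|) (hρpos : ∀ i, 0 < ρ i)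
    (x : Fin n → ℝ) :
    |∑ i, ∑ j, 1 / Real.sqrt (ρ i) * C i j * (1 / Real.sqrt (ρ j)) * x i * x j|
      ≤ ∑ i, x i ^ 2 := by
  set y : Fin n → ℝ := fun i => |x i| / Real.sqrt (ρ i) with hy
  have hsq : ∀ i, y i ^ 2 = x i ^ 2 / ρ i := by
    intro i
    rw [hy, div_pow, sq_abs, Real.sq_sqrt (hρpos i).le]
  calc |∑ i, ∑ j, 1 / Real.sqrt (ρ i) * C i j * (1 / Real.sqrt (ρ j)) * x i * x j|
      ≤ ∑ i, ∑ j, |C i j| * (y i * y j) := by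
        refine (Finset.abs_sum_le_sum_abs _ _).trans (Finset.sum_le_sum fun i _ => ?_)
        refine (Finset.abs_sum_le_sum_abs _ _).trans (Finset.sum_le_sum fun j _ => ?_)
        have h1 : |(1 : ℝ) / Real.sqrt (ρ i)| = 1 / Real.sqrt (ρ i) :=
          abs_of_nonneg (by positivity)
        have h2 : |(1 : ℝ) / Real.sqrt (ρ j)| = 1 / Real.sqrt (ρ j) :=
          abs_of_nonneg (by positivity)
        rw [abs_mul, abs_mul, abs_mul, abs_mul, h1, h2, hy]
        apply le_of_eq
        simp only []
        field_simp
    _ ≤ ∑ i, ∑ j, |C i j| * ((y i ^ 2 + y j ^ 2) / 2) := by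
        refine Finset.sum_le_sum fun i _ => Finset.sum_le_sum fun j _ => ?_
        have := two_mul_le_add_sq (y i) (y j)
        nlinarith [abs_nonneg (C i j)]
    _ = ∑ i, ∑ j, (|C i j| * y i ^ 2 / 2 + |C i j| * y j ^ 2 / 2) := by
        refine Finset.sum_congr rfl fun i _ => Finset.sum_congr rfl fun j _ => ?_; ring
    _ = (∑ i, ∑ j, |C i j| * y i ^ 2 / 2) + ∑ i, ∑ j, |C i j| * y j ^ 2 / 2 := by
        simp [Finset.sum_add_distrib]
    _ = (∑ i, ∑ j, |C i j| * y i ^ 2 / 2) + ∑ i, ∑ j, |C i j| * y i ^ 2 / 2 := by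
        congr 1
        rw [Finset.sum_comm]
        refine Finset.sum_congr rfl fun i _ => Finset.sum_congr rfl fun j _ => ?_
        rw [hC.apply i j]
    _ = ∑ i, (y i ^ 2) * ∑ j, |C i j| := by
        rw [← Finset.sum_add_distrib]
        refine Finset.sum_congr rfl fun i _ => ?_
        rw [← Finset.sum_add_distrib, Finset.mul_sum]
        refine Finset.sum_congr rfl fun j _ => ?_; ring
    _ = ∑ i, x i ^ 2 := by
        refine Finset.sum_congr rfl fun i _ => ?_
        rw [← hρ i, hsq i, div_mul_cancel₀ _ (hρpos i).ne']

/-- For a symmetric real matrix, the nuclear norm equals the sum of the absolute values of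
the eigenvalues, and we record the spectral decomposition facts we need. -/
lemma nuclearNorm_eq_sum_abs_eigenvalues {Z : Matrix (Fin n) (Fin n) ℝ} (hZ : Z.IsHermitian) :
    nuclearNorm Z = ∑ k, |hZ.eigenvalues k| := by
  set V : Matrix (Fin n) (Fin n) ℝ := (hZ.eigenvectorUnitary : Matrix (Fin n) (Fin n) ℝ) with hVdef
  have hVu : star V * V = 1 :=
    Matrix.mem_unitaryGroup_iff'.mp hZ.eigenvectorUnitary.2
  set μ : Fin n → ℝ := hZ.eigenvalues with hμdef
  have hspec : Z = V * Matrix.diagonal μ * star V := by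
    have := hZ.spectral_theorem
    simpa [RCLike.ofReal_real_eq_id] using this
  set S2 : Matrix (Fin n) (Fin n) ℝ := V * Matrix.diagonal (fun i => |μ i|) * star V with hS2def
  have hS2psd : S2.PosSemidef :=
    (Matrix.posSemidef_diagonal_iff.mpr fun i => abs_nonneg _).mul_mul_conjTranspose_same V
  have hS2sq : S2 ^ 2 = Zᴴ * Z := by
    rw [hZ.eq, pow_two, hS2def, conj_mul_conj V hVu]
    conv_rhs => rw [hspec]
    rw [conj_mul_conj V hVu]
    have habs : (fun i => |μ i| * |μ i|) = fun i => μ i * μ i :=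
      funext fun i => abs_mul_abs_self (μ i)
    rw [habs]
  have h1 : nuclearNorm Z = ∑ k, |μ k| := by
    have hM : (Zᵀ * Z).IsHermitian := by
      simpa using Matrix.isHermitian_conjTranspose_mul_self Z
    have hZZ : Zᵀ * Z = V * Matrix.diagonal (fun i => μ i * μ i) * star V := by
      rw [← conj_mul_conj V hVu, ← hspec, ← Matrix.conjTranspose_eq_transpose_of_trivial, hZ.eq]
    have hc : (Zᵀ * Z).charpoly = (Matrix.diagonal (fun i => μ i * μ i)).charpoly := by
      rw [hZZ, Matrix.charpoly_mul_comm, ← Matrix.mul_assoc, hVu, Matrix.one_mul]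
    have hroots : Multiset.map hM.eigenvalues Finset.univ.val
        = Multiset.map (fun i => μ i * μ i) Finset.univ.val := by
      have h := hM.roots_charpoly_eq_eigenvalues
      rw [hc, Matrix.charpoly_diagonal, Polynomial.roots_prod _ _
        (Finset.prod_ne_zero_iff.mpr fun i _ => Polynomial.X_sub_C_ne_zero _)] at h
      simp only [Polynomial.roots_X_sub_C, Multiset.bind_singleton, RCLike.ofReal_real_eq_id,
        Function.id_comp] at h
      exact h.symm
    have e1 : nuclearNorm Z
        = ((Multiset.map hM.eigenvalues Finset.univ.val).map Real.sqrt).sum := by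
      rw [Multiset.map_map]; rfl
    rw [e1, hroots, Multiset.map_map]
    show ∑ i, Real.sqrt (μ i * μ i) = _
    simp [Real.sqrt_mul_self_eq_abs]
  exact h1

end Stmt11Aux

open Stmt11Aux in
theorem stmt_11 {n : ℕ} (C : Matrix (Fin n) (Fin n) ℝ)
    (hC : C.IsSymm)
    (ρ : Fin n → ℝ) (hρ : ∀ i, ρ i = ∑ j, |C i j|) (hρpos : ∀ i, 0 < ρ i)
    (Chat : Matrix (Fin n) (Fin n) ℝ)
    (hChat : Chat = Matrix.diagonal (fun i => 1 / Real.sqrt (ρ i)) * C *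
      Matrix.diagonal (fun i => 1 / Real.sqrt (ρ i)))
    (f : Matrix (Fin n) (Fin n) ℝ → ℝ)
    (hf : f = fun X => -matDot Chat X + ∑ i, max (X i i - ρ i) 0) :
    ∀ X Y : Matrix (Fin n) (Fin n) ℝ, X.IsSymm → Y.IsSymm →
      |f X - f Y| ≤ 2 * nuclearNorm (X - Y) := by
  intro X Y hX hY
  set Z : Matrix (Fin n) (Fin n) ℝ := X - Y with hZdef
  have hZsymm : Z.IsSymm := by
    rw [Matrix.IsSymm, hZdef, Matrix.transpose_sub, hX.eq, hY.eq]
  have hZ : Z.IsHermitian := isHermitian_of_isSymm hZsymm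
  set V : Matrix (Fin n) (Fin n) ℝ := (hZ.eigenvectorUnitary : Matrix (Fin n) (Fin n) ℝ) with hVdef
  have hVu : star V * V = 1 :=
    Matrix.mem_unitaryGroup_iff'.mp hZ.eigenvectorUnitary.2
  set μ : Fin n → ℝ := hZ.eigenvalues with hμdef
  have hspec : Z = V * Matrix.diagonal μ * star V := by
    have := hZ.spectral_theorem
    simpa [RCLike.ofReal_real_eq_id] using this
  have hnuc : nuclearNorm Z = ∑ k, |μ k| := nuclearNorm_eq_sum_abs_eigenvalues hZ
  have hZentry : ∀ i j, Z i j = ∑ k, V i k * μ k * V j k := by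
    intro i j
    conv_lhs => rw [hspec]
    exact conj_apply V μ i j
  have hcol : ∀ k, ∑ i, V i k ^ 2 = 1 := by
    intro k
    have h := congrFun (congrFun hVu k) k
    rw [Matrix.mul_apply] at h
    simp only [Matrix.star_apply, star_trivial, Matrix.one_apply_eq] at h
    calc ∑ i, V i k ^ 2 = ∑ i, V i k * V i k := by
          refine Finset.sum_congr rfl fun i _ => ?_; ring
      _ = 1 := h
  -- diagonal bound
  have hdiag : ∑ i, |Z i i| ≤ ∑ k, |μ k| := by
    calc ∑ i, |Z i i| ≤ ∑ i, ∑ k, |μ k| * V i k ^ 2 := by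
          refine Finset.sum_le_sum fun i _ => ?_
          rw [hZentry i i]
          refine (Finset.abs_sum_le_sum_abs _ _).trans (Finset.sum_le_sum fun k _ => ?_)
          apply le_of_eq
          rw [abs_mul, abs_mul, pow_two, ← abs_mul_abs_self (V i k)]
          ring
      _ = ∑ k, |μ k| * ∑ i, V i k ^ 2 := by
          rw [Finset.sum_comm]
          refine Finset.sum_congr rfl fun k _ => ?_
          rw [Finset.mul_sum]
      _ = ∑ k, |μ k| := by simp [hcol]
  -- trace term bound
  have hChatEntry : ∀ i j, Chat i j = 1 / Real.sqrt (ρ i) * C i j * (1 / Real.sqrt (ρ j)) := by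
    intro i j
    rw [hChat, Matrix.mul_diagonal, Matrix.diagonal_mul]
  have hmd : matDot Chat Z = ∑ k, μ k * ∑ i, ∑ j, Chat i j * V i k * V j k := by
    rw [matDot, Matrix.trace]
    simp only [Matrix.diag_apply, Matrix.mul_apply, Matrix.transpose_apply]
    calc ∑ j, ∑ i, Chat i j * Z i j
        = ∑ j, ∑ i, ∑ k, Chat i j * (V i k * μ k * V j k) := by
          refine Finset.sum_congr rfl fun j _ => Finset.sum_congr rfl fun i _ => ?_
          rw [hZentry i j, Finset.mul_sum]
      _ = ∑ j, ∑ k, ∑ i, Chat i j * (V i k * μ k * V j k) := by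
          refine Finset.sum_congr rfl fun j _ => ?_
          exact Finset.sum_comm
      _ = ∑ k, ∑ j, ∑ i, Chat i j * (V i k * μ k * V j k) := Finset.sum_comm
      _ = ∑ k, μ k * ∑ i, ∑ j, Chat i j * V i k * V j k := by
          refine Finset.sum_congr rfl fun k _ => ?_
          rw [Finset.mul_sum, Finset.sum_comm]
          refine Finset.sum_congr rfl fun j _ => ?_
          rw [Finset.mul_sum]
          refine Finset.sum_congr rfl fun i _ => ?_
          ring
  have hqk : ∀ k, |∑ i, ∑ j, Chat i j * V i k * V j k| ≤ 1 := by
    intro k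
    have hb := quad_bound C hC ρ hρ hρpos (fun i => V i k)
    rw [hcol k] at hb
    calc |∑ i, ∑ j, Chat i j * V i k * V j k|
        = |∑ i, ∑ j, 1 / Real.sqrt (ρ i) * C i j * (1 / Real.sqrt (ρ j)) * V i k * V j k| := by
          congr 1
          refine Finset.sum_congr rfl fun i _ => Finset.sum_congr rfl fun j _ => ?_
          rw [hChatEntry i j]
      _ ≤ 1 := hb
  have htr : |matDot Chat Z| ≤ ∑ k, |μ k| := by
    rw [hmd]
    refine (Finset.abs_sum_le_sum_abs _ _).trans (Finset.sum_le_sum fun k _ => ?_)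
    rw [abs_mul]
    calc |μ k| * |∑ i, ∑ j, Chat i j * V i k * V j k| ≤ |μ k| * 1 :=
          mul_le_mul_of_nonneg_left (hqk k) (abs_nonneg _)
      _ = |μ k| := mul_one _
  -- assemble
  have hmds : matDot Chat X - matDot Chat Y = matDot Chat Z := by
    rw [hZdef, matDot, matDot, matDot, Matrix.mul_sub, Matrix.trace_sub]
  have hsplit : f X - f Y = -(matDot Chat Z)
      + ∑ i, (max (X i i - ρ i) 0 - max (Y i i - ρ i) 0) := by
    rw [hf, ← hmds, Finset.sum_sub_distrib]
    ring
  have hmaxsum : |∑ i, (max (X i i - ρ i) 0 - max (Y i i - ρ i) 0)| ≤ ∑ i, |Z i i| := by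
    refine (Finset.abs_sum_le_sum_abs _ _).trans (Finset.sum_le_sum fun i _ => ?_)
    have h := abs_max_sub_max_le_abs (X i i - ρ i) (Y i i - ρ i) 0
    calc |max (X i i - ρ i) 0 - max (Y i i - ρ i) 0| ≤ |X i i - ρ i - (Y i i - ρ i)| := h
      _ = |Z i i| := by rw [hZdef, Matrix.sub_apply]; ring_nf
  calc |f X - f Y| ≤ |(-(matDot Chat Z))| + |∑ i, (max (X i i - ρ i) 0 - max (Y i i - ρ i) 0)| := by
        rw [hsplit]; exact abs_add_le _ _
    _ ≤ (∑ k, |μ k|) + ∑ k, |μ k| := by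
        rw [abs_neg]
        exact add_le_add htr (hmaxsum.trans hdiag)
    _ = 2 * nuclearNorm Z := by rw [hnuc]; ring
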